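/- Let a, b, c be positive integers and let Γ be the Z-grading of K[x,y,z] with deg x = a, deg y = b, deg z = −c. If gcd(a,c) does not divide b, then every Γ-graded automorphism of K[x,y,z] has the form x ↦ λ₁x + f₀(y,z), y ↦ λ₂y, z ↦ λ₃z, where λ₁, λ₂, λ₃ ∈ K are nonzero and f₀ is a Γ-homogeneous polynomial in y, z of degree a. -/

import Mathlib

open MvPolynomial

/-- For the `ℤ`-grading of `K[x,y,z]` with weights `w`, an automorphism is *graded*
if it maps each homogeneous component into itself. -/
def IsGraded {K : Type*} [CommRing K] (w : Fin 3 → ℤ)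
    (φ : MvPolynomial (Fin 3) K ≃ₐ[K] MvPolynomial (Fin 3) K) : Prop :=
  ∀ (d : ℤ) (f : MvPolynomial (Fin 3) K),
    f.IsWeightedHomogeneous w d → (φ f).IsWeightedHomogeneous w d

lemma aux_X_dvd {K : Type*} [CommRing K] {n : ℕ} (f : MvPolynomial (Fin n) K) (i : Fin n)
    (h : ∀ m ∈ f.support, m i ≠ 0) : X i ∣ f := by
  classical
  refine ⟨∑ m ∈ f.support, monomial (m - Finsupp.single i 1) (coeff m f), ?_⟩
  conv_lhs => rw [f.as_sum]
  rw [Finset.mul_sum]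
  refine Finset.sum_congr rfl fun m hm => ?_
  have hmi : (Finsupp.single i 1 + (m - Finsupp.single i 1)) = m := by
    ext j
    rcases eq_or_ne i j with rfl | hj
    · have := h m hm
      simp only [Finsupp.add_apply, Finsupp.tsub_apply, Finsupp.single_eq_same]
      omega
    · simp [Finsupp.single_eq_of_ne' hj]
  rw [X, monomial_mul, one_mul, hmi]

lemma aux_eq_C_of_mul_eq_one {K : Type*} [CommRing K] [IsDomain K] :
    ∀ {n : ℕ} {f g : MvPolynomial (Fin n) K}, f * g = 1 → ∃ r : K, r ≠ 0 ∧ f = C r := by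
  intro n
  induction n with
  | zero =>
    intro f g hfg
    refine ⟨f.coeff 0, ?_, f.eq_C_of_isEmpty⟩
    intro h0
    have hf0 : f = 0 := by rw [f.eq_C_of_isEmpty, h0, map_zero]
    rw [hf0, zero_mul] at hfg
    exact zero_ne_one hfg
  | succ n ih =>
    intro f g hfg
    set E := finSuccEquiv K n with hE
    have h1 : E f * E g = 1 := by rw [← map_mul, hfg, map_one]
    have hunit : IsUnit (E f) := IsUnit.of_mul_eq_one _ h1
    obtain ⟨r, hr, hCr⟩ := Polynomial.isUnit_iff.mp hunit
    obtain ⟨s, hs⟩ := hr.exists_right_inv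
    obtain ⟨μ, hμ, hrC⟩ := ih hs
    refine ⟨μ, hμ, ?_⟩
    rw [← E.symm_apply_apply f, ← hCr, hrC]
    exact RingHom.congr_fun (finSuccEquiv_comp_C_eq_C n) μ

lemma aux_isGraded_symm {K : Type*} [CommRing K] (w : Fin 3 → ℤ)
    (φ : MvPolynomial (Fin 3) K ≃ₐ[K] MvPolynomial (Fin 3) K)
    (hφ : IsGraded w φ) : IsGraded w φ.symm := by
  classical
  intro d f hf
  set u := φ.symm f with hu
  have hfu : φ u = f := φ.apply_symm_apply f
  have hfin : (Function.support fun m : ℤ => weightedHomogeneousComponent w m u).Finite :=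
    weightedHomogeneousComponent_finsupp u
  set s := hfin.toFinset with hs
  have hsumu : ∑ m ∈ s, weightedHomogeneousComponent w m u = u := by
    rw [← finsum_eq_sum _ hfin, sum_weightedHomogeneousComponent]
  have hkey : ∀ e : ℤ, e ≠ d → weightedHomogeneousComponent w e u = 0 := by
    intro e he
    have hwf : weightedHomogeneousComponent w e f = 0 :=
      hf.weightedHomogeneousComponent_ne e he
    have hsum2 : ∑ m ∈ s, weightedHomogeneousComponent w e
        (φ (weightedHomogeneousComponent w m u)) = 0 := by
      have hfs : f = ∑ m ∈ s, φ (weightedHomogeneousComponent w m u) := by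
        rw [← map_sum, hsumu, hfu]
      rw [← hwf]
      conv_rhs => rw [hfs]
      rw [map_sum]
    by_cases hes : e ∈ s
    · have h1 : ∑ m ∈ s, weightedHomogeneousComponent w e
          (φ (weightedHomogeneousComponent w m u))
          = weightedHomogeneousComponent w e (φ (weightedHomogeneousComponent w e u)) :=
        Finset.sum_eq_single_of_mem e hes fun m _ hme =>
          (hφ m _ (weightedHomogeneousComponent_isWeightedHomogeneous m u)
            ).weightedHomogeneousComponent_ne e (Ne.symm hme)
      have h2 : weightedHomogeneousComponent w e (φ (weightedHomogeneousComponent w e u))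
          = φ (weightedHomogeneousComponent w e u) :=
        (hφ e _ (weightedHomogeneousComponent_isWeightedHomogeneous e u)
          ).weightedHomogeneousComponent_same
      have hzero : φ (weightedHomogeneousComponent w e u) = 0 := by
        rw [← h2, ← h1, hsum2]
      exact (map_eq_zero_iff _ φ.injective).mp hzero
    · have := hfin.mem_toFinset.not.mp hes
      simpa [Function.mem_support, not_not] using this
  intro m hm
  by_contra hne
  have h0 := hkey _ hne
  have hcm : coeff m (weightedHomogeneousComponent w ((Finsupp.weight w) m) u) = coeff m u := by
    rw [coeff_weightedHomogeneousComponent, if_pos rfl]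
  rw [h0, coeff_zero] at hcm
  exact hm hcm.symm

/-- Let `Γ` be the `ℤ`-grading of `K[x,y,z]` with `deg x = a`, `deg y = b`,
`deg z = -c`, where `a, b, c > 0`. If `gcd(a,c)` does not divide `b`, then every
graded automorphism has the form `x ↦ λ₁ x + f₀(y,z)`, `y ↦ λ₂ y`, `z ↦ λ₃ z`,
where `λ₁, λ₂, λ₃ ≠ 0` and `f₀` is a `Γ`-homogeneous polynomial in `y, z` of degree `a`.
Here `x = X 0`, `y = X 1`, `z = X 2`. -/
theorem graded_automorphism_is_almost_diagonal_of_gcd_not_dvd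
    {K : Type*} [Field K] [IsAlgClosed K] [CharZero K]
    (a b c : ℕ) (ha : 0 < a) (hb : 0 < b) (hc : 0 < c)
    (hgcd : ¬ (Nat.gcd a c ∣ b))
    (φ : MvPolynomial (Fin 3) K ≃ₐ[K] MvPolynomial (Fin 3) K)
    (hφ : IsGraded ![(a : ℤ), (b : ℤ), -(c : ℤ)] φ) :
    ∃ (l₁ l₂ l₃ : K) (f₀ : MvPolynomial (Fin 3) K),
      l₁ ≠ 0 ∧ l₂ ≠ 0 ∧ l₃ ≠ 0 ∧ (0 : Fin 3) ∉ f₀.vars ∧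
      f₀.IsWeightedHomogeneous ![(a : ℤ), (b : ℤ), -(c : ℤ)] (a : ℤ) ∧
      φ (X 0) = C l₁ * X 0 + f₀ ∧ φ (X 1) = C l₂ * X 1 ∧ φ (X 2) = C l₃ * X 2 := by
  classical
  set w : Fin 3 → ℤ := ![(a : ℤ), (b : ℤ), -(c : ℤ)] with hwdef
  have hw0 : w 0 = (a : ℤ) := rfl
  have hw1 : w 1 = (b : ℤ) := rfl
  have hw2 : w 2 = -(c : ℤ) := rfl
  have hweight : ∀ m : Fin 3 →₀ ℕ,
      (Finsupp.weight w) m = (m 0 : ℤ) * a + (m 1 : ℤ) * b - (m 2 : ℤ) * c := by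
    intro m
    rw [Finsupp.weight_apply, Finsupp.sum_fintype _ _ (fun i => by simp)]
    rw [Fin.sum_univ_three]
    simp only [smul_eq_mul, hw0, hw1, hw2]
    ring
  have hsymm : IsGraded w φ.symm := aux_isGraded_symm w φ hφ
  have hXhom : ∀ i : Fin 3, (X i : MvPolynomial (Fin 3) K).IsWeightedHomogeneous w (w i) :=
    fun i => isWeightedHomogeneous_X K w i
  -- step 1 : φ (X 1) = C l₂ * X 1
  have hydvd : ∀ f : MvPolynomial (Fin 3) K,
      f.IsWeightedHomogeneous w (b : ℤ) → X 1 ∣ f := by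
    intro f hf
    refine aux_X_dvd f 1 fun m hm h10 => ?_
    have hwm := hf (mem_support_iff.mp hm)
    rw [hweight, h10] at hwm
    have hwm' : (m 0 : ℤ) * a - (m 2 : ℤ) * c = b := by
      rw [Nat.cast_zero, zero_mul, add_zero] at hwm
      linarith
    have hd1 : (Nat.gcd a c : ℤ) ∣ (m 0 : ℤ) * a :=
      Dvd.dvd.mul_left (Int.natCast_dvd_natCast.mpr (Nat.gcd_dvd_left a c)) _
    have hd2 : (Nat.gcd a c : ℤ) ∣ (m 2 : ℤ) * c :=
      Dvd.dvd.mul_left (Int.natCast_dvd_natCast.mpr (Nat.gcd_dvd_right a c)) _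
    have hdb : (Nat.gcd a c : ℤ) ∣ (b : ℤ) := by
      rw [← hwm']
      exact dvd_sub hd1 hd2
    exact hgcd (Int.natCast_dvd_natCast.mp hdb)
  have hXb : (X 1 : MvPolynomial (Fin 3) K).IsWeightedHomogeneous w (b : ℤ) := by
    have := hXhom 1
    rwa [hw1] at this
  obtain ⟨h1, hh1⟩ := hydvd _ (hφ _ _ hXb)
  obtain ⟨h1', hh1'⟩ := hydvd _ (hsymm _ _ hXb)
  have hu1 : h1 * φ h1' = 1 := by
    apply mul_left_cancel₀ (X_ne_zero (1 : Fin 3))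
    rw [mul_one, ← mul_assoc, ← hh1, ← map_mul, ← hh1', φ.apply_symm_apply]
  obtain ⟨l₂, hl₂, hCl₂⟩ := aux_eq_C_of_mul_eq_one hu1
  have hphiy : φ (X 1) = C l₂ * X 1 := by rw [hh1, hCl₂, mul_comm]
  -- step 2 : φ (X 2) = C l₃ * X 2
  have hzdvd : ∀ f : MvPolynomial (Fin 3) K,
      f.IsWeightedHomogeneous w (-(c : ℤ)) → X 2 ∣ f := by
    intro f hf
    refine aux_X_dvd f 2 fun m hm h20 => ?_
    have hwm := hf (mem_support_iff.mp hm)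
    rw [hweight, h20] at hwm
    have h0a : (0 : ℤ) ≤ (m 0 : ℤ) * a := by positivity
    have h0b : (0 : ℤ) ≤ (m 1 : ℤ) * b := by positivity
    have hcpos : (0 : ℤ) < c := Int.natCast_pos.mpr hc
    rw [Nat.cast_zero, zero_mul, sub_zero] at hwm
    linarith
  have hXc : (X 2 : MvPolynomial (Fin 3) K).IsWeightedHomogeneous w (-(c : ℤ)) := by
    have := hXhom 2
    rwa [hw2] at this
  obtain ⟨h2, hh2⟩ := hzdvd _ (hφ _ _ hXc)
  obtain ⟨h2', hh2'⟩ := hzdvd _ (hsymm _ _ hXc)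
  have hu2 : h2 * φ h2' = 1 := by
    apply mul_left_cancel₀ (X_ne_zero (2 : Fin 3))
    rw [mul_one, ← mul_assoc, ← hh2, ← map_mul, ← hh2', φ.apply_symm_apply]
  obtain ⟨l₃, hl₃, hCl₃⟩ := aux_eq_C_of_mul_eq_one hu2
  have hphiz : φ (X 2) = C l₃ * X 2 := by rw [hh2, hCl₃, mul_comm]
  -- step 3 : the substitution identity
  have hsubst : ∀ f : MvPolynomial (Fin 3) K,
      φ f = aeval ![φ (X 0), C l₂ * X 1, C l₃ * X 2] f := by
    have hAH : (φ : MvPolynomial (Fin 3) K →ₐ[K] MvPolynomial (Fin 3) K)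
        = aeval ![φ (X 0), C l₂ * X 1, C l₃ * X 2] := by
      apply algHom_ext
      intro i
      fin_cases i
      · simp
      · simpa using hphiy
      · simpa using hphiz
    intro f
    exact DFunLike.congr_fun hAH f
  have hrel : (X 0 : MvPolynomial (Fin 3) K)
      = aeval ![φ (X 0), C l₂ * X 1, C l₃ * X 2] (φ.symm (X 0)) := by
    conv_lhs => rw [← φ.apply_symm_apply (X 0)]
    exact hsubst _
  -- step 4 : transport to Polynomial (MvPolynomial (Fin 2) K)
  set E := finSuccEquiv K 2 with hE
  set σm : MvPolynomial (Fin 2) K →ₐ[K] MvPolynomial (Fin 2) K :=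
    aeval ![C l₂ * X 0, C l₃ * X 1] with hσ
  set p := E (φ (X 0)) with hp
  have hone : (1 : Fin 3) = Fin.succ 0 := rfl
  have htwo : (2 : Fin 3) = Fin.succ 1 := rfl
  have hEC : ∀ k : K, E (C k) = Polynomial.C (C k) := fun k => by
    simp [hE, finSuccEquiv_apply]
  have hEX1 : E (X 1) = Polynomial.C (X 0) := by rw [hone, hE]; exact finSuccEquiv_X_succ
  have hEX2 : E (X 2) = Polynomial.C (X 1) := by rw [htwo, hE]; exact finSuccEquiv_X_succ
  have hEX0 : E (X 0) = Polynomial.X := by rw [hE]; exact finSuccEquiv_X_zero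
  have hσ0 : σm (X 0) = C l₂ * X 0 := by simp [hσ]
  have hσ1 : σm (X 1) = C l₃ * X 1 := by simp [hσ]
  have hkey : ∀ f : MvPolynomial (Fin 3) K,
      E (aeval ![φ (X 0), C l₂ * X 1, C l₃ * X 2] f)
        = Polynomial.eval₂ Polynomial.C p
            (Polynomial.map (σm : MvPolynomial (Fin 2) K →+* MvPolynomial (Fin 2) K) (E f)) := by
    have hF : (E.toAlgHom.toRingHom.comp
        ((aeval ![φ (X 0), C l₂ * X 1, C l₃ * X 2] :
          MvPolynomial (Fin 3) K →ₐ[K] MvPolynomial (Fin 3) K) :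
          MvPolynomial (Fin 3) K →+* MvPolynomial (Fin 3) K))
        = (Polynomial.eval₂RingHom Polynomial.C p).comp
            ((Polynomial.mapRingHom (σm : MvPolynomial (Fin 2) K →+* MvPolynomial (Fin 2) K)
              ).comp E.toAlgHom.toRingHom) := by
      apply MvPolynomial.ringHom_ext
      · intro k
        show E (aeval ![φ (X 0), C l₂ * X 1, C l₃ * X 2] (C k))
          = Polynomial.eval₂ Polynomial.C p
              (Polynomial.map (σm : MvPolynomial (Fin 2) K →+* MvPolynomial (Fin 2) K) (E (C k)))
        rw [aeval_C, hEC, Polynomial.map_C, Polynomial.eval₂_C]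
        show E (C k) = _
        rw [hEC]
        congr 1
        symm
        show (σm (C k) : MvPolynomial (Fin 2) K) = C k
        rw [aeval_C]
        rfl
      · intro i
        show E (aeval ![φ (X 0), C l₂ * X 1, C l₃ * X 2] (X i))
          = Polynomial.eval₂ Polynomial.C p
              (Polynomial.map (σm : MvPolynomial (Fin 2) K →+* MvPolynomial (Fin 2) K) (E (X i)))
        rw [aeval_X]
        fin_cases i
        · show E (φ (X 0)) = Polynomial.eval₂ Polynomial.C p (Polynomial.map (↑σm) (E (X 0)))
          rw [hEX0]
          simp only [Polynomial.map_X, Polynomial.eval₂_X]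
          rfl
        · show E (C l₂ * X 1) = Polynomial.eval₂ Polynomial.C p (Polynomial.map (↑σm) (E (X 1)))
          rw [hEX1, Polynomial.map_C, Polynomial.eval₂_C]
          rw [map_mul, hEC, hEX1, ← map_mul]
          congr 1
          symm
          show σm (X 0) = C l₂ * X 0
          exact hσ0
        · show E (C l₃ * X 2) = Polynomial.eval₂ Polynomial.C p (Polynomial.map (↑σm) (E (X 2)))
          rw [hEX2, Polynomial.map_C, Polynomial.eval₂_C]
          rw [map_mul, hEC, hEX2, ← map_mul]
          congr 1
          symm
          show σm (X 1) = C l₃ * X 1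
          exact hσ1
    intro f
    exact RingHom.congr_fun hF f
  set q := Polynomial.map (σm : MvPolynomial (Fin 2) K →+* MvPolynomial (Fin 2) K)
      (E (φ.symm (X 0))) with hq
  have hXrel : (Polynomial.X : Polynomial (MvPolynomial (Fin 2) K)) = q.comp p := by
    have h1' := hkey (φ.symm (X 0))
    rw [← hrel] at h1'
    rw [hEX0] at h1'
    rw [h1', hq]
    rfl
  have hdeg : q.natDegree * p.natDegree = 1 := by
    have hnd := congrArg Polynomial.natDegree hXrel
    rw [Polynomial.natDegree_X, Polynomial.natDegree_comp] at hnd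
    exact hnd.symm
  have hqd : q.natDegree = 1 := Nat.eq_one_of_mul_eq_one_right hdeg
  have hpd : p.natDegree = 1 := Nat.eq_one_of_mul_eq_one_left hdeg
  obtain ⟨p1, hp1ne, p0, hpform⟩ := Polynomial.natDegree_eq_one.mp hpd
  obtain ⟨q1, hq1ne, q0, hqform⟩ := Polynomial.natDegree_eq_one.mp hqd
  have hXrel2 : (Polynomial.X : Polynomial (MvPolynomial (Fin 2) K))
      = Polynomial.C q1 * p + Polynomial.C q0 := by
    rw [hXrel, ← hqform]
    simp [Polynomial.add_comp, Polynomial.mul_comp, Polynomial.C_comp, Polynomial.X_comp]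
  have hpc1 : p.coeff 1 = p1 := by
    rw [← hpform]
    simp
  have hcoeff : q1 * p1 = 1 := by
    have hc := congrArg (fun r : Polynomial (MvPolynomial (Fin 2) K) => r.coeff 1) hXrel2
    simp only [Polynomial.coeff_X_one, Polynomial.coeff_add, Polynomial.coeff_C_mul,
      Polynomial.coeff_C, if_neg (one_ne_zero), add_zero, hpc1] at hc
    exact hc.symm
  have hc2 : p1 * q1 = 1 := by rw [mul_comm]; exact hcoeff
  obtain ⟨μ, hμ, hp1C⟩ := aux_eq_C_of_mul_eq_one hc2
  have hsymmC : ∀ bb : MvPolynomial (Fin 2) K,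
      E.symm (Polynomial.C bb) = rename Fin.succ bb := by
    have hFr : ((E.symm.toAlgHom.toRingHom).comp
        (Polynomial.C : MvPolynomial (Fin 2) K →+* Polynomial (MvPolynomial (Fin 2) K)))
        = (rename (Fin.succ : Fin 2 → Fin 3)).toRingHom := by
      apply MvPolynomial.ringHom_ext
      · intro k
        show E.symm (Polynomial.C (C k)) = rename Fin.succ (C k)
        rw [rename_C]
        exact RingHom.congr_fun (finSuccEquiv_comp_C_eq_C 2) k
      · intro i
        show E.symm (Polynomial.C (X i)) = rename Fin.succ (X i)
        rw [rename_X]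
        rw [AlgEquiv.symm_apply_eq]
        exact finSuccEquiv_X_succ.symm
    intro bb
    exact RingHom.congr_fun hFr bb
  have hEsX : E.symm Polynomial.X = X 0 := by rw [← hEX0, AlgEquiv.symm_apply_apply]
  have hphix : φ (X 0) = C μ * X 0 + rename Fin.succ p0 := by
    have hA : φ (X 0) = E.symm p := (AlgEquiv.symm_apply_apply E _).symm
    rw [hA, ← hpform, hp1C, map_add, map_mul, hsymmC, hsymmC, rename_C, hEsX]
  refine ⟨μ, l₂, l₃, rename Fin.succ p0, hμ, hl₂, hl₃, ?_, ?_, hphix, hphiy, hphiz⟩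
  · intro h0
    obtain ⟨j, _, hj⟩ := Finset.mem_image.mp (vars_rename _ _ h0)
    exact Fin.succ_ne_zero j hj
  · have hf0eq : rename Fin.succ p0 = φ (X 0) - C μ * X 0 := by rw [hphix]; ring
    have hV : (φ (X 0)).IsWeightedHomogeneous w (a : ℤ) := by
      have := hφ _ _ (hXhom 0)
      rwa [hw0] at this
    have hCX : (C μ * X 0 : MvPolynomial (Fin 3) K).IsWeightedHomogeneous w (a : ℤ) := by
      have := (isWeightedHomogeneous_C w μ).mul (hXhom 0)
      rwa [zero_add, hw0] at this
    rw [hf0eq]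
    intro m hm
    rw [coeff_sub] at hm
    by_cases hcf : coeff m (φ (X 0)) ≠ 0
    · exact hV hcf
    · push_neg at hcf
      rw [hcf, zero_sub, neg_ne_zero] at hm
      exact hCX hm
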